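/- Let X be a complex Hilbert space, (Xₙ) an increasing sequence of closed subspaces with ⋃ₙ Xₙ dense, Pₙ the orthogonal projection onto Xₙ, Qₙ = 1 − Pₙ, and H : D(H) ⊆ X → X densely defined and linear. Assume for every n: (A1) the operator x ↦ H*(Pₙx) with domain {x : Pₙx ∈ D(H*)} is densely defined; (A2) for every x ∈ D(H) and ε > 0 there is z ∈ Qₙ[D(H)] with ‖z‖ ≤ ε, Pₙx + z ∈ D(H), and Pₙ(H(Pₙx + z) − Hx) = 0; (A3) for every x ∈ D(H) and ε > 0 there is w ∈ Qₙ[D(H)] with Pₙx + w ∈ D(H) and ‖Qₙ((1 − H)(Pₙx + w))‖ ≤ ε. Let Hₙ : Pₙ[D(H)] ⊆ Xₙ → Xₙ, Hₙ(Pₙx) := Pₙ(Hx) (well-defined under (A1)–(A2)). Then: (i) if every Hₙ is dissipative, then H is dissipative; (ii) for every n, Range(1 − Hₙ) is contained in the closure of Range(1 − H); (iii) if every Hₙ is dissipative and Range(1 − Hₙ) is dense in Xₙ, then H is closable and its closure H̄ is maximal dissipative in X. -/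

import Mathlib

open Filter Topology

set_option linter.unusedSectionVars false
set_option linter.unusedVariables false
set_option maxHeartbeats 1000000


open scoped InnerProductSpace

variable {X : Type*} [NormedAddCommGroup X] [InnerProductSpace ℂ X] [CompleteSpace X]

/-- A (partially defined) linear operator `H` in a complex Hilbert space is *dissipative*
if `Re ⟪H x, x⟫ ≤ 0` for all `x` in its domain. -/
def IsDissipative (H : X →ₗ.[ℂ] X) : Prop :=
  ∀ x : H.domain, (⟪H x, (x : X)⟫_ℂ).re ≤ 0

/-- A dissipative operator is *maximal dissipative* if every dissipative extension of it
coincides with it. -/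
def IsMaximalDissipative (H : X →ₗ.[ℂ] X) : Prop :=
  IsDissipative H ∧ ∀ K : X →ₗ.[ℂ] X, IsDissipative K → H ≤ K → K = H

lemma diss_norm_sq {H : X →ₗ.[ℂ] X} (h : IsDissipative H) (x : H.domain) :
    ‖(x:X)‖^2 + ‖H x‖^2 ≤ ‖(x:X) - H x‖^2 := by
  have h1 := norm_sub_sq (𝕜 := ℂ) (x:X) (H x)
  have h2 : (⟪(x:X), H x⟫_ℂ).re = (⟪H x, (x:X)⟫_ℂ).re := by
    simpa using inner_re_symm (𝕜 := ℂ) (x:X) (H x)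
  have h3 := h x
  simp only [RCLike.re_to_complex] at h1
  nlinarith [h1, h2, h3]


lemma diss_closable {H : X →ₗ.[ℂ] X} (hdense : Dense (H.domain : Set X))
    (h : IsDissipative H) : H.IsClosable := by
  refine ⟨(H.graph.topologicalClosure).toLinearPMap,
    (Submodule.toLinearPMap_graph_eq _ ?_).symm⟩
  rintro ⟨a, y⟩ hmem (rfl : a = 0)
  have hmem' : ((0 : X), y) ∈ closure (H.graph : Set (X × X)) := hmem
  obtain ⟨g, hg, hgl⟩ := mem_closure_iff_seq_limit.mp hmem'
  have h1 : Tendsto (fun k => (g k).1) atTop (𝓝 (0 : X)) :=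
    (continuous_fst.tendsto _).comp hgl
  have h2 : Tendsto (fun k => (g k).2) atTop (𝓝 y) :=
    (continuous_snd.tendsto _).comp hgl
  choose xk hxk1 hxk2 using fun k => H.mem_graph_iff.mp (hg k)
  have key : ∀ u : H.domain, (⟪y, (u : X)⟫_ℂ).re ≤ 0 := by
    intro u
    have step : ∀ t : ℝ, 0 < t → (⟪y, (u:X)⟫_ℂ).re + t * (⟪H u, (u:X)⟫_ℂ).re ≤ 0 := by
      intro t ht
      have hle : ∀ k, (⟪H (xk k) + (t:ℂ) • H u, ((xk k : X) + (t:ℂ) • (u:X))⟫_ℂ).re ≤ 0 := by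
        intro k
        have h0 := h (xk k + (t:ℂ) • u)
        have e1 : H (xk k + (t:ℂ) • u) = H (xk k) + (t:ℂ) • H u := by
          rw [H.map_add, H.map_smul]
        have e2 : ((xk k + (t:ℂ) • u : H.domain) : X) = (xk k : X) + (t:ℂ) • (u:X) := rfl
        rwa [e1, e2] at h0
      have hlim : Tendsto (fun k => (⟪H (xk k) + (t:ℂ) • H u, ((xk k : X) + (t:ℂ) • (u:X))⟫_ℂ).re)
          atTop (𝓝 ((⟪y + (t:ℂ) • H u, (t:ℂ) • (u:X)⟫_ℂ).re)) := by
        have ha : Tendsto (fun k => H (xk k) + (t:ℂ) • H u) atTop (𝓝 (y + (t:ℂ) • H u)) := by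
          have : Tendsto (fun k => H (xk k)) atTop (𝓝 y) := by
            simpa [hxk2] using h2
          exact this.add tendsto_const_nhds
        have hb : Tendsto (fun k => ((xk k : X) + (t:ℂ) • (u:X))) atTop (𝓝 ((0:X) + (t:ℂ) • (u:X))) := by
          have : Tendsto (fun k => (xk k : X)) atTop (𝓝 (0:X)) := by
            simpa [hxk1] using h1
          exact this.add tendsto_const_nhds
        rw [zero_add] at hb
        exact (Complex.continuous_re.tendsto _).comp (ha.inner hb)
      have hle2 : (⟪y + (t:ℂ) • H u, (t:ℂ) • (u:X)⟫_ℂ).re ≤ 0 :=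
        le_of_tendsto hlim (Eventually.of_forall hle)
      have hexp0 : ⟪y + (t:ℂ) • H u, (t:ℂ) • (u:X)⟫_ℂ
          = (t:ℂ) * ⟪y, (u:X)⟫_ℂ + (t:ℂ) * ((t:ℂ) * ⟪H u, (u:X)⟫_ℂ) := by
        simp only [inner_add_left, inner_smul_right, inner_smul_left, Complex.conj_ofReal]
        ring
      rw [hexp0] at hle2
      simp only [Complex.add_re, Complex.mul_re, Complex.ofReal_re, Complex.ofReal_im,
        zero_mul, sub_zero] at hle2
      nlinarith
    by_contra hpos
    push_neg at hpos
    set a := (⟪y, (u:X)⟫_ℂ).re with ha'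
    set b := (⟪H u, (u:X)⟫_ℂ).re with hb'
    set c := |b| + 1 with hc
    have hcpos : 0 < c := by positivity
    have ht : 0 < a / (2*c) := by positivity
    have hstep := step _ ht
    have hbc : 0 < 2*c + b := by
      have := neg_abs_le b
      nlinarith
    have hmul := mul_pos ht hbc
    have hfe : a / (2*c) * (2*c) = a := by field_simp
    nlinarith
  have key2 : ∀ v : H.domain, ⟪(v : X), y⟫_ℂ = 0 := by
    intro v
    have e1 : ∀ u : H.domain, (⟪y, (u:X)⟫_ℂ).re = 0 := by
      intro u
      have k1 := key u
      have k2 := key (-u)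
      simp only [Submodule.coe_neg, inner_neg_right, Complex.neg_re] at k2
      linarith
    have e2 : (⟪y, (v:X)⟫_ℂ).im = 0 := by
      have := e1 (Complex.I • v)
      have ecoe : ((Complex.I • v : H.domain) : X) = Complex.I • (v:X) := rfl
      rw [ecoe, inner_smul_right] at this
      simp only [Complex.mul_re, Complex.I_re, Complex.I_im, zero_mul, one_mul, zero_sub,
        neg_eq_zero] at this
      exact this
    have : ⟪y, (v:X)⟫_ℂ = 0 := Complex.ext (e1 v) e2
    rw [← inner_conj_symm, this, map_zero]
  exact hdense.eq_zero_of_inner_right ℂ (fun v hv => key2 ⟨v, hv⟩)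

lemma diss_closure {H : X →ₗ.[ℂ] X} (hc : H.IsClosable) (h : IsDissipative H) :
    IsDissipative H.closure := by
  intro x
  have hx : ((x : X), H.closure x) ∈ closure (H.graph : Set (X × X)) := by
    have : ((x : X), H.closure x) ∈ H.closure.graph := H.closure.mem_graph x
    rw [← hc.graph_closure_eq_closure_graph] at this
    exact this
  obtain ⟨g, hg, hgl⟩ := mem_closure_iff_seq_limit.mp hx
  choose xk hxk1 hxk2 using fun k => H.mem_graph_iff.mp (hg k)
  have h1 : Tendsto (fun k => (xk k : X)) atTop (𝓝 (x : X)) := by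
    simpa [hxk1, Function.comp_def] using (continuous_fst.tendsto _).comp hgl
  have h2 : Tendsto (fun k => H (xk k)) atTop (𝓝 (H.closure x)) := by
    simpa [hxk2, Function.comp_def] using (continuous_snd.tendsto _).comp hgl
  have hlim : Tendsto (fun k => (⟪H (xk k), (xk k : X)⟫_ℂ).re) atTop
      (𝓝 ((⟪H.closure x, (x : X)⟫_ℂ).re)) :=
    (Complex.continuous_re.tendsto _).comp (h2.inner h1)
  exact le_of_tendsto hlim (Eventually.of_forall fun k => h (xk k))


lemma sq_le_norm {a c : ℝ} (ha : 0 ≤ a) (hc : 0 ≤ c) (h : a^2 ≤ c^2) : a ≤ c := by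
  nlinarith


lemma diss_surj {H : X →ₗ.[ℂ] X} (hclosed : H.IsClosed) (h : IsDissipative H)
    (hr : ∀ y : X, y ∈ closure {y : X | ∃ x : H.domain, (x : X) - H x = y}) (y : X) :
    ∃ x : H.domain, (x : X) - H x = y := by
  obtain ⟨f, hf, hfl⟩ := mem_closure_iff_seq_limit.mp (hr y)
  choose xk hxk using hf
  -- norm bounds
  have hdist : ∀ k l, ‖(xk k : X) - (xk l : X)‖ ≤ ‖f k - f l‖ ∧
      ‖H (xk k) - H (xk l)‖ ≤ ‖f k - f l‖ := by
    intro k l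
    have hd := diss_norm_sq h (xk k - xk l)
    have e1 : ((xk k - xk l : H.domain) : X) = (xk k : X) - (xk l : X) := rfl
    have e2 : H (xk k - xk l) = H (xk k) - H (xk l) := H.map_sub _ _
    rw [e1, e2] at hd
    have e3 : ((xk k : X) - (xk l : X)) - (H (xk k) - H (xk l)) = f k - f l := by
      rw [← hxk k, ← hxk l]; abel
    rw [e3] at hd
    constructor
    · exact sq_le_norm (norm_nonneg _) (norm_nonneg _) (by nlinarith [sq_nonneg (‖H (xk k) - H (xk l)‖)])
    · exact sq_le_norm (norm_nonneg _) (norm_nonneg _) (by nlinarith [sq_nonneg (‖(xk k : X) - (xk l : X)‖)])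
  have hfc : CauchySeq f := hfl.cauchySeq
  have hxc : CauchySeq (fun k => (xk k : X)) := by
    rw [Metric.cauchySeq_iff] at hfc ⊢
    intro ε hε
    obtain ⟨N, hN⟩ := hfc ε hε
    exact ⟨N, fun k hk l hl => lt_of_le_of_lt (by simpa [dist_eq_norm] using (hdist k l).1) (hN k hk l hl)⟩
  have hHc : CauchySeq (fun k => H (xk k)) := by
    rw [Metric.cauchySeq_iff] at hfc ⊢
    intro ε hε
    obtain ⟨N, hN⟩ := hfc ε hε
    exact ⟨N, fun k hk l hl => lt_of_le_of_lt (by simpa [dist_eq_norm] using (hdist k l).2) (hN k hk l hl)⟩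
  obtain ⟨x₀, hx₀⟩ := cauchySeq_tendsto_of_complete hxc
  obtain ⟨z, hz⟩ := cauchySeq_tendsto_of_complete hHc
  have hmemg : (x₀, z) ∈ (H.graph : Set (X × X)) := by
    have : Tendsto (fun k => ((xk k : X), H (xk k))) atTop (𝓝 (x₀, z)) := hx₀.prodMk_nhds hz
    have hmemc : (x₀, z) ∈ closure (H.graph : Set (X × X)) :=
      mem_closure_of_tendsto this (Eventually.of_forall fun k => H.mem_graph (xk k))
    rwa [hclosed.closure_eq] at hmemc
  obtain ⟨xx, hxx⟩ := H.mem_graph_iff'.mp hmemg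
  have hxx1 : (xx : X) = x₀ := congrArg Prod.fst hxx
  have hxx2 : H xx = z := congrArg Prod.snd hxx
  refine ⟨xx, ?_⟩
  have hlim2 : Tendsto f atTop (𝓝 (x₀ - z)) := by
    have : Tendsto (fun k => (xk k : X) - H (xk k)) atTop (𝓝 (x₀ - z)) := hx₀.sub hz
    simpa [hxk] using this
  rw [hxx1, hxx2]
  exact tendsto_nhds_unique hlim2 hfl

lemma diss_max {H : X →ₗ.[ℂ] X} (h : IsDissipative H)
    (hsurj : ∀ y : X, ∃ x : H.domain, (x : X) - H x = y)
    (K : X →ₗ.[ℂ] X) (hK : IsDissipative K) (hHK : H ≤ K) : K = H := by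
  have hinj : ∀ u : K.domain, (u : X) - K u = 0 → (u : X) = 0 := by
    intro u hu
    have hd := diss_norm_sq hK u
    rw [hu] at hd
    have hd' : ‖(u:X)‖^2 + ‖K u‖^2 ≤ 0 := by simpa using hd
    have : ‖(u:X)‖ = 0 := by nlinarith [norm_nonneg (u:X), sq_nonneg ‖K u‖]
    simpa using this
  have hdom : K.domain = H.domain := by
    refine le_antisymm ?_ hHK.1
    intro ux hux
    set u : K.domain := ⟨ux, hux⟩
    obtain ⟨x, hx⟩ := hsurj ((u : X) - K u)
    obtain ⟨xK, hxK1, hxK2⟩ := LinearPMap.exists_of_le hHK x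
    -- (x : X) - K xK = (u : X) - K u
    have hKeq : (xK : X) - K xK = (u : X) - K u := by
      rw [← hxK1, ← hxK2]; exact hx
    have hzero : ((u - xK : K.domain) : X) - K (u - xK) = 0 := by
      have e2 : K (u - xK) = K u - K xK := K.map_sub _ _
      have e1 : ((u - xK : K.domain) : X) = (u : X) - (xK : X) := rfl
      rw [e1, e2]
      rw [sub_eq_zero]
      have := hKeq
      abel_nf
      abel_nf at this ⊢
      linear_combination (norm := abel1) -this
    have := hinj _ hzero
    have e1 : ((u - xK : K.domain) : X) = (u : X) - (xK : X) := rfl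
    rw [e1, sub_eq_zero] at this
    -- u = xK as elements of X, and (xK : X) = (x : X) ∈ H.domain
    have hux2 : ux = (x : X) := by
      rw [show ux = (u : X) from rfl, this, ← hxK1]
    rw [hux2]
    exact x.2
  exact (LinearPMap.eq_of_le_of_domain_eq hHK hdom.symm).symm

section proj
variable {K : Submodule ℂ X} {p : X →L[ℂ] X}
  (hmem : ∀ x, p x ∈ K) (horth : ∀ x, x - p x ∈ Kᗮ)
include hmem horth

lemma proj_inner_right (a b : X) : ⟪a, p b⟫_ℂ = ⟪p a, p b⟫_ℂ := by
  have h0 : ⟪a - p a, p b⟫_ℂ = 0 :=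
    Submodule.inner_left_of_mem_orthogonal (hmem b) (horth a)
  rw [inner_sub_left, sub_eq_zero] at h0
  exact h0

lemma proj_inner_left (a b : X) : ⟪p a, b⟫_ℂ = ⟪p a, p b⟫_ℂ := by
  have h0 : ⟪p a, b - p b⟫_ℂ = 0 :=
    Submodule.inner_right_of_mem_orthogonal (hmem a) (horth b)
  rw [inner_sub_right, sub_eq_zero] at h0
  exact h0

lemma proj_mem_eq {u : X} (hu : u ∈ K) : p u = u := by
  have h1 : u - p u ∈ K := K.sub_mem hu (hmem u)
  have h2 : ⟪u - p u, u - p u⟫_ℂ = 0 :=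
    Submodule.inner_right_of_mem_orthogonal h1 (horth u)
  rw [inner_self_eq_zero, sub_eq_zero] at h2
  exact h2.symm

lemma proj_orth_eq_zero {u : X} (hu : u ∈ Kᗮ) : p u = 0 := by
  have h1 : p u ∈ Kᗮ := by
    have : p u = u - (u - p u) := by abel
    rw [this]
    exact Kᗮ.sub_mem hu (horth u)
  have h2 : ⟪p u, p u⟫_ℂ = 0 :=
    Submodule.inner_right_of_mem_orthogonal (hmem u) h1
  rwa [inner_self_eq_zero] at h2

end proj

lemma proj_tendsto (Xn : ℕ → Submodule ℂ X) (hmono : Monotone Xn)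
    (hUdense : Dense (⋃ m, ((Xn m : Submodule ℂ X) : Set X)))
    (P : ℕ → X →L[ℂ] X) (hPmem : ∀ m x, P m x ∈ Xn m)
    (hPortho : ∀ m x, x - P m x ∈ (Xn m)ᗮ) (x : X) :
    Tendsto (fun n => P n x) atTop (𝓝 x) := by
  rw [Metric.tendsto_atTop]
  intro ε hε
  have hx : x ∈ closure (⋃ m, ((Xn m : Submodule ℂ X) : Set X)) := hUdense x
  obtain ⟨y, hy, hxy⟩ := Metric.mem_closure_iff.mp hx ε hε
  obtain ⟨s, ⟨m, rfl⟩, hym⟩ := hy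
  refine ⟨m, fun n hn => ?_⟩
  have hyn : y ∈ Xn n := hmono hn hym
  have hd : P n x - y ∈ Xn n := (Xn n).sub_mem (hPmem n x) hyn
  have h0 : ⟪x - P n x, P n x - y⟫_ℂ = 0 :=
    Submodule.inner_left_of_mem_orthogonal hd (hPortho n x)
  have hsq : ‖x - y‖^2 = ‖x - P n x‖^2 + ‖P n x - y‖^2 := by
    have : x - y = (x - P n x) + (P n x - y) := by abel
    rw [this, norm_add_sq (𝕜 := ℂ), h0]
    simp
  have hle : ‖x - P n x‖ ≤ ‖x - y‖ := by
    nlinarith [norm_nonneg (x - P n x), norm_nonneg (x - y), sq_nonneg (‖P n x - y‖)]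
  have hdx : dist (P n x) x = ‖x - P n x‖ := by
    rw [dist_eq_norm, ← norm_neg, neg_sub]
  rw [hdx]
  calc ‖x - P n x‖ ≤ ‖x - y‖ := hle
    _ = dist x y := (dist_eq_norm x y).symm
    _ < ε := hxy

lemma wd_core {Xm : Submodule ℂ X} {p q : X →L[ℂ] X}
    (hmem : ∀ x, p x ∈ Xm) (horth : ∀ x, x - p x ∈ Xmᗮ)
    (hq : ∀ x, q x = x - p x)
    {H : X →ₗ.[ℂ] X} (hdense : Dense (H.domain : Set X))
    (hA2' : ∀ (x : H.domain) (ε : ℝ), 0 < ε → ∃ w : H.domain,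
      ‖q (w : X)‖ ≤ ε ∧ ∃ hz : p (x : X) + q (w : X) ∈ H.domain,
        p (H ⟨p (x : X) + q (w : X), hz⟩ - H x) = 0)
    (x : H.domain) (v : X) (hv : p v ∈ H.adjoint.domain) :
    ⟪v, p (H x)⟫_ℂ = ⟪(H.adjoint ⟨p v, hv⟩ : X), p (x : X)⟫_ℂ := by
  set A := H.adjoint ⟨p v, hv⟩ with hA
  have hfa := LinearPMap.adjoint_isFormalAdjoint hdense
  -- ∀ ε > 0, bound
  have key : ∀ ε : ℝ, 0 < ε → ‖⟪v, p (H x)⟫_ℂ - ⟪A, p (x:X)⟫_ℂ‖ ≤ ‖A‖ * ε := by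
    intro ε hε
    obtain ⟨w, hw, hz, hPz⟩ := hA2' x ε hε
    set x' : H.domain := ⟨p (x:X) + q (w:X), hz⟩ with hx'
    have hPz' : p (H x') = p (H x) := by
      have := hPz
      rw [map_sub, sub_eq_zero] at this
      exact this
    have e1 : ⟪v, p (H x)⟫_ℂ = ⟪p v, H x'⟫_ℂ := by
      rw [← hPz', proj_inner_right hmem horth v (H x'),
        ← proj_inner_left hmem horth v (H x')]
    have e2 : ⟪p v, H x'⟫_ℂ = ⟪A, (x' : X)⟫_ℂ := (hfa ⟨p v, hv⟩ x').symm
    have e3 : (x' : X) = p (x:X) + q (w:X) := rfl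
    have e4 : ⟪A, (x':X)⟫_ℂ = ⟪A, p (x:X)⟫_ℂ + ⟪A, q (w:X)⟫_ℂ := by
      rw [e3, inner_add_right]
    have e5 : ‖⟪A, q (w:X)⟫_ℂ‖ ≤ ‖A‖ * ε :=
      le_trans (norm_inner_le_norm _ _) (mul_le_mul_of_nonneg_left hw (norm_nonneg A))
    have e6 : ⟪v, p (H x)⟫_ℂ - ⟪A, p (x:X)⟫_ℂ = ⟪A, q (w:X)⟫_ℂ := by
      rw [e1, e2, e4]; ring
    rw [e6]
    exact e5
  have h0 : ‖⟪v, p (H x)⟫_ℂ - ⟪A, p (x:X)⟫_ℂ‖ ≤ 0 := by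
    by_contra hlt
    push_neg at hlt
    set d := ‖⟪v, p (H x)⟫_ℂ - ⟪A, p (x:X)⟫_ℂ‖ with hd
    set N := ‖A‖ with hN
    have hNpos : (0:ℝ) < N + 1 := by positivity
    have ht : 0 < d / (2*(N+1)) := by positivity
    have hk := key _ ht
    have hfe : d / (2*(N+1)) * (2*(N+1)) = d := by field_simp
    nlinarith [mul_nonneg (le_of_lt ht) (norm_nonneg A)]
  have : ⟪v, p (H x)⟫_ℂ - ⟪A, p (x:X)⟫_ℂ = 0 := by
    rwa [← norm_le_zero_iff]
  rw [sub_eq_zero] at this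
  exact this


lemma wd {Xm : Submodule ℂ X} {p q : X →L[ℂ] X}
    (hmem : ∀ x, p x ∈ Xm) (horth : ∀ x, x - p x ∈ Xmᗮ)
    (hq : ∀ x, q x = x - p x)
    {H : X →ₗ.[ℂ] X} (hdense : Dense (H.domain : Set X))
    (hA1' : Dense {x : X | p x ∈ H.adjoint.domain})
    (hA2' : ∀ (x : H.domain) (ε : ℝ), 0 < ε → ∃ w : H.domain,
      ‖q (w : X)‖ ≤ ε ∧ ∃ hz : p (x : X) + q (w : X) ∈ H.domain,
        p (H ⟨p (x : X) + q (w : X), hz⟩ - H x) = 0)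
    (x₁ x₂ : H.domain) (hP : p (x₁ : X) = p (x₂ : X)) : p (H x₁) = p (H x₂) := by
  set Sn : Submodule ℂ X := Submodule.comap (p : X →ₗ[ℂ] X) H.adjoint.domain with hSn
  have hSd : Dense (Sn : Set X) := hA1'
  refine hSd.eq_of_inner_right ℂ (fun v' hv' =>
    (?_ : ∀ v : Sn, ⟪(v : X), p (H x₁)⟫_ℂ = ⟪(v : X), p (H x₂)⟫_ℂ) ⟨v', hv'⟩)
  intro v
  have hv : p (v : X) ∈ H.adjoint.domain := v.2
  rw [wd_core hmem horth hq hdense hA2' x₁ (v : X) hv,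
    wd_core hmem horth hq hdense hA2' x₂ (v : X) hv, hP]

/-- In the setting of an increasing sequence `(Xₙ)` of closed subspaces
with dense union, orthogonal projections `Pₙ` and `Qₙ = 1 − Pₙ`, and a densely defined
linear `H` satisfying, for every `n`, the assumptions (A1), (A2), (A3), consider
`Hₙ (Pₙ x) := Pₙ (H x)` on `Pₙ[D(H)] ⊆ Xₙ`.  Then:
(i) if every `Hₙ` is dissipative, so is `H`;
(ii) `Range(1 − Hₙ) ⊆ closure (Range (1 − H))` for every `n`;
(iii) if every `Hₙ` is dissipative with `Range(1 − Hₙ)` dense in `Xₙ`, then `H` is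
closable and its closure is maximal dissipative. -/
theorem stmt_18 (Xn : ℕ → Submodule ℂ X) (hmono : Monotone Xn)
    (hXnclosed : ∀ m, IsClosed ((Xn m : Submodule ℂ X) : Set X))
    (hUdense : Dense (⋃ m, ((Xn m : Submodule ℂ X) : Set X)))
    (P Q : ℕ → X →L[ℂ] X) (hPmem : ∀ m x, P m x ∈ Xn m)
    (hPortho : ∀ m x, x - P m x ∈ (Xn m)ᗮ)
    (hQ : ∀ m x, Q m x = x - P m x)
    (H : X →ₗ.[ℂ] X) (hdense : Dense (H.domain : Set X))
    (hA1 : ∀ n : ℕ, Dense {x : X | P n x ∈ H.adjoint.domain})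
    (hA2 : ∀ (n : ℕ) (x : H.domain) (ε : ℝ), 0 < ε → ∃ w : H.domain,
      ‖Q n (w : X)‖ ≤ ε ∧ ∃ hz : P n (x : X) + Q n (w : X) ∈ H.domain,
        P n (H ⟨P n (x : X) + Q n (w : X), hz⟩ - H x) = 0)
    (hA3 : ∀ (n : ℕ) (x : H.domain) (ε : ℝ), 0 < ε → ∃ w : H.domain,
      ∃ hz : P n (x : X) + Q n (w : X) ∈ H.domain,
        ‖Q n ((P n (x : X) + Q n (w : X)) - H ⟨P n (x : X) + Q n (w : X), hz⟩)‖ ≤ ε) :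
    ((∀ (n : ℕ) (x : H.domain), (⟪P n (H x), P n (x : X)⟫_ℂ).re ≤ 0) → IsDissipative H) ∧
    (∀ n : ℕ, {y : X | ∃ x : H.domain, P n (x : X) - P n (H x) = y} ⊆
        closure {y : X | ∃ x : H.domain, (x : X) - H x = y}) ∧
    ((∀ n : ℕ, (∀ x : H.domain, (⟪P n (H x), P n (x : X)⟫_ℂ).re ≤ 0) ∧
        ((Xn n : Set X) ⊆ closure {y : X | ∃ x : H.domain, P n (x : X) - P n (H x) = y})) →
      (H.IsClosable ∧ IsMaximalDissipative H.closure)) := by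
  have hconv : ∀ x : X, Tendsto (fun n => P n x) atTop (𝓝 x) :=
    proj_tendsto Xn hmono hUdense P hPmem hPortho
  -- Part (i)
  have part1 : (∀ (n : ℕ) (x : H.domain), (⟪P n (H x), P n (x : X)⟫_ℂ).re ≤ 0) →
      IsDissipative H := by
    intro hd x
    have hle : ∀ n, (⟪H x, P n (x : X)⟫_ℂ).re ≤ 0 := by
      intro n
      rw [proj_inner_right (hPmem n) (hPortho n) (H x) (x : X)]
      exact hd n x
    have hlim : Tendsto (fun n => (⟪H x, P n (x : X)⟫_ℂ).re) atTop
        (𝓝 ((⟪H x, (x : X)⟫_ℂ).re)) :=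
      (Complex.continuous_re.tendsto _).comp (tendsto_const_nhds.inner (hconv (x : X)))
    exact le_of_tendsto hlim (Eventually.of_forall hle)
  -- well-definedness
  have hwd : ∀ (n : ℕ) (x₁ x₂ : H.domain), P n (x₁ : X) = P n (x₂ : X) →
      P n (H x₁) = P n (H x₂) :=
    fun n => wd (hPmem n) (hPortho n) (hQ n) hdense (hA1 n) (hA2 n)
  -- Part (ii)
  have part2 : ∀ n : ℕ, {y : X | ∃ x : H.domain, P n (x : X) - P n (H x) = y} ⊆
      closure {y : X | ∃ x : H.domain, (x : X) - H x = y} := by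
    intro n y hy
    obtain ⟨x, rfl⟩ := hy
    rw [Metric.mem_closure_iff]
    intro ε hε
    obtain ⟨w, hz, hw⟩ := hA3 n x (ε/2) (by positivity)
    set x' : H.domain := ⟨P n (x : X) + Q n (w : X), hz⟩ with hx'
    refine ⟨(x' : X) - H x', ⟨x', rfl⟩, ?_⟩
    have hQw : Q n (w : X) ∈ (Xn n)ᗮ := by
      rw [hQ n (w : X)]; exact hPortho n (w : X)
    have hPx' : P n (x' : X) = P n (x : X) := by
      have e : (x' : X) = P n (x : X) + Q n (w : X) := rfl
      rw [e, map_add, proj_mem_eq (hPmem n) (hPortho n) (hPmem n (x : X)),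
        proj_orth_eq_zero (hPmem n) (hPortho n) hQw, add_zero]
    have hPH : P n (H x') = P n (H x) := hwd n x' x hPx'
    have hb : P n ((x' : X) - H x') = P n (x : X) - P n (H x) := by
      rw [map_sub, hPx', hPH]
    have hsplit : ((x' : X) - H x') - (P n (x : X) - P n (H x)) = Q n ((x' : X) - H x') := by
      rw [hQ n ((x' : X) - H x'), hb]
    have hwnorm : ‖Q n ((x' : X) - H x')‖ ≤ ε / 2 := hw
    rw [dist_eq_norm]
    have e2 : (P n (x : X) - P n (H x)) - ((x' : X) - H x') = -(Q n ((x' : X) - H x')) := by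
      rw [← hsplit]; abel
    rw [e2, norm_neg]
    linarith
  refine ⟨part1, part2, ?_⟩
  -- Part (iii)
  intro hyp
  have hdiss : IsDissipative H := part1 (fun n => (hyp n).1)
  have hcl : H.IsClosable := diss_closable hdense hdiss
  have hcdiss : IsDissipative H.closure := diss_closure hcl hdiss
  set S := {y : X | ∃ x : H.domain, (x : X) - H x = y} with hS
  have hsub : (⋃ m, ((Xn m : Submodule ℂ X) : Set X)) ⊆ closure S := by
    rintro u hu
    obtain ⟨s, ⟨m, rfl⟩, hum⟩ := hu
    have h1 := (hyp m).2 hum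
    exact closure_minimal (part2 m) isClosed_closure h1
  have hdenseS : Dense (closure S) := hUdense.mono hsub
  have hrange : ∀ y : X, y ∈ closure S := by
    intro y
    have := hdenseS y
    rwa [closure_closure] at this
  have hrange' : ∀ y : X,
      y ∈ closure {y : X | ∃ x : H.closure.domain, (x : X) - H.closure x = y} := by
    intro y
    refine closure_mono ?_ (hrange y)
    rintro b ⟨x, rfl⟩
    obtain ⟨x', hx'1, hx'2⟩ := LinearPMap.exists_of_le H.le_closure x
    exact ⟨x', by rw [← hx'1, ← hx'2]⟩
  have hsurj := diss_surj hcl.closure_isClosed hcdiss hrange'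
  exact ⟨hcl, hcdiss, fun K hK hHK => diss_max hcdiss hsurj K hK hHK⟩
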